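/- Let 𝕂 be a non-discrete Hausdorff topological field, E, F Hausdorff topological 𝕂-vector spaces, U ⊆ E open, and f : U → F of class C² in the BGN sense. Then for all v, w ∈ E and x ∈ U, the iterated directional derivatives satisfy ∂_v ∂_w f(x) = ∂_w ∂_v f(x). -/

import Mathlib

/-- Schwarz' lemma in BGN calculus: if `f : U → F` is of class C², i.e. it admits a
continuous difference-quotient map `f¹` on `U⁽¹⁾` which itself admits a continuous
difference-quotient map `f² = (f¹)¹` on `(U⁽¹⁾)⁽¹⁾`, then the second-order directional
derivatives `∂_v ∂_w f(x) = f²((x,w,0),(v,0,0),0)` are symmetric in `v` and `w`. -/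
theorem stmt_5 (𝕂 : Type*) [Field 𝕂] [TopologicalSpace 𝕂] [IsTopologicalRing 𝕂] [T2Space 𝕂]
    (hK : Dense {t : 𝕂 | t ≠ 0})
    (E F : Type*) [AddCommGroup E] [Module 𝕂 E] [TopologicalSpace E]
    [IsTopologicalAddGroup E] [ContinuousSMul 𝕂 E] [T2Space E]
    [AddCommGroup F] [Module 𝕂 F] [TopologicalSpace F]
    [IsTopologicalAddGroup F] [ContinuousSMul 𝕂 F] [T2Space F]
    (U : Set E) (hU : IsOpen U) (f : E → F)
    (hf : ContinuousOn f U)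
    (f1 : E × E × 𝕂 → F)
    (hf1cont : ContinuousOn f1 {p : E × E × 𝕂 | p.1 ∈ U ∧ p.1 + p.2.2 • p.2.1 ∈ U})
    (hf1 : ∀ p : E × E × 𝕂, p.1 ∈ U → p.1 + p.2.2 • p.2.1 ∈ U →
      f (p.1 + p.2.2 • p.2.1) - f p.1 = p.2.2 • f1 p)
    (f2 : (E × E × 𝕂) × (E × E × 𝕂) × 𝕂 → F)
    (hf2cont : ContinuousOn f2
      {q : (E × E × 𝕂) × (E × E × 𝕂) × 𝕂 |
        (q.1.1 ∈ U ∧ q.1.1 + q.1.2.2 • q.1.2.1 ∈ U) ∧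
        ((q.1 + q.2.2 • q.2.1).1 ∈ U ∧
          (q.1 + q.2.2 • q.2.1).1 + (q.1 + q.2.2 • q.2.1).2.2 • (q.1 + q.2.2 • q.2.1).2.1 ∈ U)})
    (hf2 : ∀ q : (E × E × 𝕂) × (E × E × 𝕂) × 𝕂,
      (q.1.1 ∈ U ∧ q.1.1 + q.1.2.2 • q.1.2.1 ∈ U) →
      ((q.1 + q.2.2 • q.2.1).1 ∈ U ∧
        (q.1 + q.2.2 • q.2.1).1 + (q.1 + q.2.2 • q.2.1).2.2 • (q.1 + q.2.2 • q.2.1).2.1 ∈ U) →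
      f1 (q.1 + q.2.2 • q.2.1) - f1 q.1 = q.2.2 • f2 q) :
    ∀ x ∈ U, ∀ v w : E,
      f2 ((x, w, 0), (v, 0, 0), 0) = f2 ((x, v, 0), (w, 0, 0), 0) := by
  intro x hx v w
  set V : Set 𝕂 := {t : 𝕂 | x + t • w ∈ U ∧ (x + t • v ∈ U ∧ x + t • v + t • w ∈ U)}
    with hVdef
  have hVopen : IsOpen V := by
    have h1 : IsOpen {t : 𝕂 | x + t • w ∈ U} := hU.preimage (by fun_prop)
    have h2 : IsOpen {t : 𝕂 | x + t • v ∈ U} := hU.preimage (by fun_prop)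
    have h3 : IsOpen {t : 𝕂 | x + t • v + t • w ∈ U} := hU.preimage (by fun_prop)
    exact h1.inter (h2.inter h3)
  have h0V : (0 : 𝕂) ∈ V := by
    simp only [hVdef, Set.mem_setOf_eq, zero_smul, add_zero]
    exact ⟨hx, hx, hx⟩
  set g : 𝕂 → F := fun t => f2 ((x, w, t), (v, 0, 0), t) with hgdef
  set h : 𝕂 → F := fun t => f2 ((x, v, t), (w, 0, 0), t) with hhdef
  have hmemg : ∀ t ∈ V, ((x, w, t), (v, 0, 0), t) ∈
      {q : (E × E × 𝕂) × (E × E × 𝕂) × 𝕂 |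
        (q.1.1 ∈ U ∧ q.1.1 + q.1.2.2 • q.1.2.1 ∈ U) ∧
        ((q.1 + q.2.2 • q.2.1).1 ∈ U ∧
          (q.1 + q.2.2 • q.2.1).1 + (q.1 + q.2.2 • q.2.1).2.2 • (q.1 + q.2.2 • q.2.1).2.1 ∈ U)} := by
    intro t ht
    simp only [Set.mem_setOf_eq, Prod.smul_mk, Prod.mk_add_mk, smul_zero, add_zero,
      smul_eq_mul, mul_zero]
    exact ⟨⟨hx, ht.1⟩, ht.2.1, ht.2.2⟩
  have hmemh : ∀ t ∈ V, ((x, v, t), (w, 0, 0), t) ∈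
      {q : (E × E × 𝕂) × (E × E × 𝕂) × 𝕂 |
        (q.1.1 ∈ U ∧ q.1.1 + q.1.2.2 • q.1.2.1 ∈ U) ∧
        ((q.1 + q.2.2 • q.2.1).1 ∈ U ∧
          (q.1 + q.2.2 • q.2.1).1 + (q.1 + q.2.2 • q.2.1).2.2 • (q.1 + q.2.2 • q.2.1).2.1 ∈ U)} := by
    intro t ht
    simp only [Set.mem_setOf_eq, Prod.smul_mk, Prod.mk_add_mk, smul_zero, add_zero,
      smul_eq_mul, mul_zero]
    refine ⟨⟨hx, ht.2.1⟩, ht.1, ?_⟩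
    have h3 := ht.2.2
    rwa [add_right_comm] at h3
  have hgcont : ContinuousOn g V := hf2cont.comp (by fun_prop) hmemg
  have hhcont : ContinuousOn h V := hf2cont.comp (by fun_prop) hmemh
  have key : ∀ t ∈ V, t • t • g t = t • t • h t := by
    intro t ht
    have hA : x + t • w ∈ U := ht.1
    have hB : x + t • v ∈ U := ht.2.1
    have hC : x + t • v + t • w ∈ U := ht.2.2
    have hC' : x + t • w + t • v ∈ U := by rwa [add_right_comm]
    have e1 : f1 (x + t • v, w, t) - f1 (x, w, t) = t • g t := by
      have e := hf2 ((x, w, t), (v, 0, 0), t) ⟨hx, hA⟩ (hmemg t ht).2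
      simpa only [Prod.smul_mk, Prod.mk_add_mk, smul_zero, add_zero, smul_eq_mul,
        mul_zero] using e
    have e2 : f1 (x + t • w, v, t) - f1 (x, v, t) = t • h t := by
      have e := hf2 ((x, v, t), (w, 0, 0), t) ⟨hx, hB⟩ (hmemh t ht).2
      simpa only [Prod.smul_mk, Prod.mk_add_mk, smul_zero, add_zero, smul_eq_mul,
        mul_zero] using e
    have d1 : f (x + t • v + t • w) - f (x + t • v) = t • f1 (x + t • v, w, t) :=
      hf1 (x + t • v, w, t) hB hC
    have d2 : f (x + t • w) - f x = t • f1 (x, w, t) := hf1 (x, w, t) hx hA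
    have d3 : f (x + t • w + t • v) - f (x + t • w) = t • f1 (x + t • w, v, t) :=
      hf1 (x + t • w, v, t) hA hC'
    have d4 : f (x + t • v) - f x = t • f1 (x, v, t) := hf1 (x, v, t) hx hB
    have L : t • t • g t =
        f (x + t • v + t • w) - f (x + t • v) - (f (x + t • w) - f x) := by
      rw [← e1, smul_sub, ← d1, ← d2]
    have R : t • t • h t =
        f (x + t • w + t • v) - f (x + t • w) - (f (x + t • v) - f x) := by
      rw [← e2, smul_sub, ← d3, ← d4]
    rw [L, R, add_right_comm x (t • v) (t • w)]
    abel
  have hns : NoZeroSMulDivisors 𝕂 F := inferInstance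
  have heqne : ∀ t ∈ V, t ≠ 0 → g t = h t := by
    intro t ht htne
    have e := key t ht
    exact smul_right_injective F htne (smul_right_injective F htne e)
  have hne : (nhdsWithin (0 : 𝕂) {(0 : 𝕂)}ᶜ).NeBot := by
    refine mem_closure_iff_nhdsWithin_neBot.mp ?_
    simpa [Set.compl_def] using hK 0
  have hg0 : Filter.Tendsto g (nhdsWithin (0 : 𝕂) {(0 : 𝕂)}ᶜ) (nhds (g 0)) :=
    ((hgcont.continuousAt (hVopen.mem_nhds h0V)).tendsto).mono_left nhdsWithin_le_nhds
  have hh0 : Filter.Tendsto h (nhdsWithin (0 : 𝕂) {(0 : 𝕂)}ᶜ) (nhds (h 0)) :=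
    ((hhcont.continuousAt (hVopen.mem_nhds h0V)).tendsto).mono_left nhdsWithin_le_nhds
  have hfeq : g =ᶠ[nhdsWithin (0 : 𝕂) {(0 : 𝕂)}ᶜ] h := by
    filter_upwards [nhdsWithin_le_nhds (hVopen.mem_nhds h0V), self_mem_nhdsWithin]
      with t htV htne
    exact heqne t htV htne
  exact tendsto_nhds_unique (hg0.congr' hfeq) hh0
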